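/- Given a pair of adjunctions L ⊣ R : A → B and F ⊣ G : C → B, and an object C ∈ C, the following are equivalent: (1) there exists A ∈ A such that the unit η_A : A → RLA is an isomorphism and LA ≅ FC in B; (2) the counit ε_{FC} : LRFC → FC is an isomorphism. -/
import Mathlib

open CategoryTheory

/-- Proposition 3.3 (abstracto2), (1) ⟺ (2): for adjunctions `L ⊣ R` and `F ⊣ G`
and an object `c`, there exists `a` with `η_a` an isomorphism and `L a ≅ F c`
iff the counit `ε_{Fc} : LRFc ⟶ Fc` is an isomorphism. -/
theorem stmt1 {A B C : Type*} [Category A] [Category B] [Category C]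
    (L : A ⥤ B) (R : B ⥤ A) (adj1 : L ⊣ R)
    (F : C ⥤ B) (G : B ⥤ C) (adj2 : F ⊣ G) (c : C) :
    (∃ a : A, IsIso (adj1.unit.app a) ∧ Nonempty (L.obj a ≅ F.obj c)) ↔
      IsIso (adj1.counit.app (F.obj c)) := by
  constructor
  · rintro ⟨a, hη, ⟨e⟩⟩
    have hεLa : IsIso (adj1.counit.app (L.obj a)) := by
      have tri := adj1.left_triangle_components a
      have h : IsIso (L.map (adj1.unit.app a) ≫ adj1.counit.app (L.obj a)) := by
        rw [tri]; exact IsIso.id _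
      exact IsIso.of_isIso_comp_left (L.map (adj1.unit.app a)) _
    have h2 : L.map (R.map e.hom) ≫ adj1.counit.app (F.obj c)
        = adj1.counit.app (L.obj a) ≫ e.hom := by
      simpa using adj1.counit.naturality e.hom
    have heq : adj1.counit.app (F.obj c)
        = inv (L.map (R.map e.hom)) ≫ adj1.counit.app (L.obj a) ≫ e.hom := by
      rw [← h2]; simp
    rw [heq]; infer_instance
  · intro hε
    refine ⟨R.obj (F.obj c), ?_, ⟨asIso (adj1.counit.app (F.obj c))⟩⟩
    have tri := adj1.right_triangle_components (F.obj c)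
    have h : IsIso (adj1.unit.app (R.obj (F.obj c)) ≫ R.map (adj1.counit.app (F.obj c))) := by
      rw [tri]; exact IsIso.id _
    exact IsIso.of_isIso_comp_right _ (R.map (adj1.counit.app (F.obj c)))
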